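/- arXiv:1611.06739 — 2 statements merged into one kernel-verified Lean document; each statement's English description precedes it below -/
import Mathlib

section
/- If h < m, then there exists an integer i with m − h ≤ i ≤ m such that h·p_{(i)} ≤ (i − m + h + 1)·α; in particular the quantity z = min{m−h ≤ i ≤ m : h·p_{(i)} ≤ (i−m+h+1)·α} is well defined whenever h < m. -/
open Finset

attribute [local instance] Classical.propDecidable

/-- The `i`-th smallest (1-indexed) element of the multiset of p-values `{p_j : j ∈ I}`. -/
noncomputable def pOrd {m : ℕ} (p : Fin m → ℝ) (I : Finset (Fin m)) (i : ℕ) : ℝ :=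
  ((I.val.map p).sort (· ≤ ·)).getD (i - 1) 0

/-- The Simes local test rejects `H_I` (written `I ∈ 𝒰`) iff `I` is nonempty and
`|I|·p_{(i:I)} ≤ i·α` for at least one `1 ≤ i ≤ |I|`. -/
def SimesU {m : ℕ} (α : ℝ) (p : Fin m → ℝ) (I : Finset (Fin m)) : Prop :=
  ∃ i, 1 ≤ i ∧ i ≤ I.card ∧ (I.card : ℝ) * pOrd p I i ≤ (i : ℝ) * α

/-- Closed testing rejects `H_I` (written `I ∈ 𝒳`) iff `J ∈ 𝒰` for every `J ⊇ I`. -/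
def ClosedX {m : ℕ} (α : ℝ) (p : Fin m → ℝ) (I : Finset (Fin m)) : Prop :=
  ∀ J, I ⊆ J → SimesU α p J

/-- `K_i = {r_{m−i+1},…,r_m}`: the `i` indices with largest p-values. -/
def Kset {m : ℕ} (r : Fin m → Fin m) (i : ℕ) : Finset (Fin m) :=
  (Finset.univ.filter fun j : Fin m => m - i ≤ (j : ℕ)).image r

/-- `L_i = {r_1,…,r_i}`: the `i` indices with smallest p-values. -/
def Lset {m : ℕ} (r : Fin m → Fin m) (i : ℕ) : Finset (Fin m) :=
  (Finset.univ.filter fun j : Fin m => (j : ℕ) < i).image r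

/-- `h = max{0 ≤ i ≤ m : K_i ∉ 𝒰}`. -/
noncomputable def hval {m : ℕ} (α : ℝ) (p : Fin m → ℝ) (r : Fin m → Fin m) : ℕ :=
  sSup {i | i ≤ m ∧ ¬ SimesU α p (Kset r i)}

/-- `t(S) = max{|I| : I ⊆ S, I ∉ 𝒳}`. -/
noncomputable def tval {m : ℕ} (α : ℝ) (p : Fin m → ℝ) (S : Finset (Fin m)) : ℕ :=
  sSup {k | ∃ I, I ⊆ S ∧ ¬ ClosedX α p I ∧ I.card = k}

/-- `d(S) = |S| − t(S)`. -/
noncomputable def dval {m : ℕ} (α : ℝ) (p : Fin m → ℝ) (S : Finset (Fin m)) : ℕ :=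
  S.card - tval α p S

/-- `q_α(S) = t(S)/|S|` for nonempty `S`, and `0` for `S = ∅`. -/
noncomputable def qval {m : ℕ} (α : ℝ) (p : Fin m → ℝ) (S : Finset (Fin m)) : ℝ :=
  if S = ∅ then 0 else (tval α p S : ℝ) / S.card

/-- `z = 0` if `h = m`, else `z = min{m−h ≤ i ≤ m : h·p_{(i)} ≤ (i−m+h+1)·α}`. -/
noncomputable def zval {m : ℕ} (α : ℝ) (p : Fin m → ℝ) (r : Fin m → Fin m) : ℕ :=
  if hval α p r = m then 0 else
    sInf {i | m - hval α p r ≤ i ∧ i ≤ m ∧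
      (hval α p r : ℝ) * pOrd p Finset.univ i ≤ ((i : ℝ) - m + hval α p r + 1) * α}

/-- `b_q = max{1 ≤ i ≤ m : m·p_{(i)} ≤ i·q}` (with `b_q = 0` if no such `i`). -/
noncomputable def bval {m : ℕ} (q : ℝ) (p : Fin m → ℝ) : ℕ :=
  sSup {i | 1 ≤ i ∧ i ≤ m ∧ (m : ℝ) * pOrd p Finset.univ i ≤ (i : ℝ) * q}


lemma Kset_map {m k : ℕ} (r : Fin m → Fin m) (hr : Function.Injective r) (hk : k ≤ m) :
    Kset r k = Finset.map ⟨fun i : Fin k => r ⟨m - k + i, by omega⟩,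
      fun a b hab => by
        have := hr hab
        have h2 : m - k + (a : ℕ) = m - k + (b : ℕ) := by
          simpa [Fin.ext_iff] using this
        exact Fin.ext (by omega)⟩ Finset.univ := by
  ext x
  simp only [Kset, Finset.mem_image, Finset.mem_map, Finset.mem_filter, Finset.mem_univ,
    true_and, Function.Embedding.coeFn_mk]
  constructor
  · rintro ⟨j, hj, rfl⟩
    refine ⟨⟨(j : ℕ) - (m - k), by omega⟩, ?_⟩
    congr 1
    exact Fin.ext (by show ((r _ : Fin m) : ℕ) = _; congr 2; ext; show m - k + ((j : ℕ) - (m - k)) = (j : ℕ); omega)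
  · rintro ⟨i, rfl⟩
    exact ⟨⟨m - k + i, by omega⟩, by simp, rfl⟩

lemma card_Kset {m k : ℕ} (r : Fin m → Fin m) (hr : Function.Injective r) (hk : k ≤ m) :
    (Kset r k).card = k := by
  rw [Kset_map r hr hk, Finset.card_map, Finset.card_univ, Fintype.card_fin]

lemma sort_Kset {m k : ℕ} (p : Fin m → ℝ) (r : Fin m → Fin m) (hr : Function.Injective r)
    (hmono : ∀ i j : Fin m, i ≤ j → p (r i) ≤ p (r j)) (hk : k ≤ m) :
    ((Kset r k).val.map p).sort (· ≤ ·) =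
      List.ofFn (fun i : Fin k => p (r ⟨m - k + i, by omega⟩)) := by
  refine (fun hp h1 h2 => List.Perm.eq_of_pairwise' (r := (· ≤ ·)) h1 h2 hp) ?_ ?_ ?_
  · rw [← Multiset.coe_eq_coe, Multiset.sort_eq]
    rw [Kset_map r hr hk, Finset.map_val, Multiset.map_map, Fin.univ_val_map]
    rfl
  · exact Multiset.pairwise_sort _ _
  · rw [List.pairwise_ofFn]
    intro a b hab
    have hab' : (a : ℕ) < b := hab
    exact hmono _ _ (by rw [Fin.le_def]; simp only [Fin.val_mk]; omega)

lemma pOrd_Kset {m k i : ℕ} (p : Fin m → ℝ) (r : Fin m → Fin m) (hr : Function.Injective r)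
    (hmono : ∀ a b : Fin m, a ≤ b → p (r a) ≤ p (r b)) (hk : k ≤ m)
    (hi1 : 1 ≤ i) (hik : i ≤ k) :
    pOrd p (Kset r k) i = p (r ⟨m - k + i - 1, by omega⟩) := by
  unfold pOrd
  rw [sort_Kset p r hr hmono hk]
  have hlen : i - 1 < (List.ofFn (fun j : Fin k => p (r ⟨m - k + j, by omega⟩))).length := by
    simp; omega
  rw [List.getD_eq_getElem _ _ hlen, List.getElem_ofFn]
  congr 2
  simp only [Fin.mk.injEq, Fin.val_mk]
  omega

lemma Kset_top {m : ℕ} (r : Fin m → Fin m) (hr : Function.Bijective r) :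
    Kset r m = Finset.univ := by
  ext x
  simp only [Kset, Finset.mem_image, Finset.mem_filter, Finset.mem_univ, true_and, iff_true]
  obtain ⟨j, rfl⟩ := hr.surjective x
  exact ⟨j, by omega, rfl⟩

theorem stmt5
    (m : ℕ) (hm : 1 ≤ m) (α : ℝ) (hα : 0 ≤ α ∧ α ≤ 1)
    (p : Fin m → ℝ) (hp : ∀ i, 0 ≤ p i ∧ p i ≤ 1)
    (r : Fin m → Fin m) (hr : Function.Bijective r)
    (hmono : ∀ i j : Fin m, i ≤ j → p (r i) ≤ p (r j))
    (hh : hval α p r < m) :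
    ∃ i, m - hval α p r ≤ i ∧ i ≤ m ∧
      (hval α p r : ℝ) * pOrd p Finset.univ i ≤
        ((i : ℝ) - m + hval α p r + 1) * α := by
  classical
  set h := hval α p r with hhdef
  -- basic facts about the sup defining h
  set S : Set ℕ := {i | i ≤ m ∧ ¬ SimesU α p (Kset r i)} with hS
  have hK0 : Kset r 0 = (∅ : Finset (Fin m)) := by
    ext x
    simp only [Kset, Finset.mem_image, Finset.mem_filter, Finset.mem_univ, true_and,
      Finset.notMem_empty, iff_false]
    rintro ⟨j, hj, rfl⟩
    omega
  have h0S : 0 ∈ S := by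
    refine ⟨Nat.zero_le m, ?_⟩
    rintro ⟨i, hi1, hi2, -⟩
    rw [hK0] at hi2
    simp at hi2
    omega
  have hbdd : BddAbove S := ⟨m, fun x hx => hx.1⟩
  have hhm : h ≤ m := (Nat.sSup_mem ⟨0, h0S⟩ hbdd).1
  have hh1m : h + 1 ≤ m := hh
  have hsimes : SimesU α p (Kset r (h + 1)) := by
    by_contra hc
    have : h + 1 ∈ S := ⟨hh1m, hc⟩
    have h2 := le_csSup hbdd this
    have hsup : sSup S = h := rfl
    omega
  obtain ⟨i, hi1, hi2, hile⟩ := hsimes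
  have hcard : (Kset r (h + 1)).card = h + 1 := card_Kset r hr.injective hh1m
  rw [hcard] at hi2 hile
  -- the index in the full ordered list
  refine ⟨m - (h + 1) + i, by omega, by omega, ?_⟩
  have huniv : pOrd p Finset.univ (m - (h + 1) + i)
      = p (r ⟨m - (h + 1) + i - 1, by omega⟩) := by
    have he := pOrd_Kset (k := m) (i := m - (h + 1) + i) p r hr.injective hmono le_rfl
      (by omega) (by omega)
    rw [← Kset_top r hr, he]
    have harg : (⟨m - m + (m - (h + 1) + i) - 1, by omega⟩ : Fin m)
        = ⟨m - (h + 1) + i - 1, by omega⟩ := by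
      simp only [Fin.mk.injEq]
      omega
    rw [harg]
  have hKv : pOrd p (Kset r (h + 1)) i = p (r ⟨m - (h + 1) + i - 1, by omega⟩) :=
    pOrd_Kset p r hr.injective hmono hh1m hi1 hi2
  rw [huniv, ← hKv]
  have hnn : 0 ≤ pOrd p (Kset r (h + 1)) i := by
    rw [hKv]; exact (hp _).1
  have hcast : ((m - (h + 1) + i : ℕ) : ℝ) - m + h + 1 = (i : ℝ) := by
    push_cast [Nat.cast_sub hh1m]
    ring
  rw [hcast]
  calc (h : ℝ) * pOrd p (Kset r (h + 1)) i
      ≤ ((h : ℝ) + 1) * pOrd p (Kset r (h + 1)) i := by nlinarith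
    _ ≤ (i : ℝ) * α := by exact_mod_cast hile
end

section
/- The concentration set is contained in the Benjamini–Hochberg rejection set at the same level: Z ⊆ B_α, i.e., z ≤ b_α. -/
open Finset

attribute [local instance] Classical.propDecidable

lemma pOrd_eq_of_map {m n : ℕ} (p : Fin m → ℝ) (S : Finset (Fin m)) (e : Fin n ↪ Fin m)
    (hS : Finset.map e Finset.univ = S) (hmono : Monotone (p ∘ e))
    (i : ℕ) (h1 : 1 ≤ i) (h2 : i ≤ n) :
    pOrd p S i = p (e ⟨i - 1, by omega⟩) := by
  have hsort : (S.val.map p).sort (· ≤ ·) = List.ofFn (p ∘ e) := by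
    refine List.Perm.eq_of_pairwise' (Multiset.pairwise_sort ..) hmono.sortedLE_ofFn.pairwise ?_
    rw [← Multiset.coe_eq_coe, Multiset.sort_eq, ← hS, Finset.map_val, Multiset.map_map,
      Fin.univ_val_map]
  rw [pOrd, hsort, List.getD_eq_getElem _ _ (by simp; omega)]
  simp

section Aux

variable {m : ℕ} (α : ℝ) (p : Fin m → ℝ) (r : Fin m → Fin m)

lemma not_simesU_empty : ¬ SimesU α p (∅ : Finset (Fin m)) := by
  rintro ⟨i, h1, h2, -⟩
  simp at h2; omega

lemma Kset_zero : Kset r 0 = ∅ := by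
  ext x
  simp [Kset, Nat.not_le.mpr (Fin.is_lt _)]

lemma Lset_zero : Lset r 0 = ∅ := by
  ext x; simp [Lset]

lemma Lset_mono {a b : ℕ} (hab : a ≤ b) : Lset r a ⊆ Lset r b := by
  apply Finset.image_subset_image
  intro x hx
  simp only [Finset.mem_filter, Finset.mem_univ, true_and] at *
  omega

lemma Kset_eq_map (hr : Function.Injective r) (n : ℕ) (hn : n ≤ m) :
    Finset.map (⟨fun j : Fin n => r ⟨m - n + (j : ℕ), by omega⟩,
      fun a b hab => by
        have h2 : (m - n + (a : ℕ)) = (m - n + (b : ℕ)) := congrArg Fin.val (hr hab)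
        exact Fin.ext (by omega)⟩) Finset.univ = Kset r n := by
  ext x
  simp only [Finset.mem_map, Finset.mem_univ, true_and, Kset, Finset.mem_image,
    Finset.mem_filter, Function.Embedding.coeFn_mk]
  constructor
  · rintro ⟨j, rfl⟩
    exact ⟨⟨m - n + (j : ℕ), by omega⟩, Nat.le_add_right _ _, rfl⟩
  · rintro ⟨a, ha, rfl⟩
    refine ⟨⟨(a : ℕ) - (m - n), by omega⟩, ?_⟩
    congr 1
    exact congrArg r (Fin.ext (show m - n + ((a : ℕ) - (m - n)) = (a : ℕ) by omega) : (⟨m - n + ((a : ℕ) - (m - n)), by omega⟩ : Fin m) = a)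

lemma Kset_card (hr : Function.Injective r) (n : ℕ) (hn : n ≤ m) :
    (Kset r n).card = n := by
  rw [← Kset_eq_map r hr n hn, Finset.card_map, Finset.card_univ, Fintype.card_fin]

end Aux

theorem stmt10
    (m : ℕ) (hm : 1 ≤ m) (α : ℝ) (hα : 0 ≤ α ∧ α ≤ 1)
    (p : Fin m → ℝ) (hp : ∀ i, 0 ≤ p i ∧ p i ≤ 1)
    (r : Fin m → Fin m) (hr : Function.Bijective r)
    (hmono : ∀ i j : Fin m, i ≤ j → p (r i) ≤ p (r j)) :
    zval α p r ≤ bval α p ∧ Lset r (zval α p r) ⊆ Lset r (bval α p) := by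
  have hrinj := hr.injective
  have h0A : (0:ℕ) ∈ {i | i ≤ m ∧ ¬ SimesU α p (Kset r i)} :=
    ⟨Nat.zero_le m, by rw [Kset_zero]; exact not_simesU_empty α p⟩
  have hbddA : BddAbove {i | i ≤ m ∧ ¬ SimesU α p (Kset r i)} :=
    ⟨m, fun x hx => hx.1⟩
  have hhm : hval α p r ≤ m := (Nat.sSup_mem ⟨0, h0A⟩ hbddA).1
  by_cases hcase : hval α p r = m
  · have hz0 : zval α p r = 0 := by unfold zval; exact if_pos hcase
    rw [hz0]
    exact ⟨Nat.zero_le _, by rw [Lset_zero]; exact Finset.empty_subset _⟩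
  · have hlt : hval α p r < m := lt_of_le_of_ne hhm hcase
    set h := hval α p r with hh
    have hK : SimesU α p (Kset r (h+1)) := by
      by_contra hS
      have : h + 1 ≤ hval α p r := le_csSup hbddA ⟨by omega, hS⟩
      omega
    obtain ⟨i, hi1, hi2, hineq⟩ := hK
    rw [Kset_card r hrinj (h+1) (by omega)] at hi2 hineq
    set j := m - h - 1 + i with hjdef
    have hj1 : 1 ≤ j := by omega
    have hjm : j ≤ m := by omega
    have hjz : m - h ≤ j := by omega
    have e1 : pOrd p (Kset r (h+1)) i
        = p (r ⟨m - (h+1) + (i - 1), by omega⟩) := by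
      refine pOrd_eq_of_map p _ _ (Kset_eq_map r hrinj (h+1) (by omega)) ?_ i hi1 hi2
      intro a b hab
      have hab' : (a : ℕ) ≤ (b : ℕ) := Fin.le_def.mp hab
      exact hmono _ _ (Fin.mk_le_mk.mpr (by omega))
    have e2 : pOrd p Finset.univ j = p (r ⟨j - 1, by omega⟩) := by
      refine pOrd_eq_of_map p _ ⟨r, hrinj⟩ (Finset.eq_univ_of_card _ (by simp)) ?_ j hj1 hjm
      exact fun a b hab => hmono a b hab
    have hPval : pOrd p (Kset r (h+1)) i = pOrd p Finset.univ j := by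
      rw [e1, e2]
      exact congrArg p (congrArg r (Fin.ext (show m - (h+1) + (i-1) = j - 1 by omega)))
    rw [hPval] at hineq
    set P := pOrd p Finset.univ j with hP
    have hP0 : 0 ≤ P := by rw [e2]; exact (hp _).1
    have hkey : ((h:ℝ)+1) * P ≤ (i:ℝ) * α := by exact_mod_cast hineq
    have hji : (j:ℝ) - m + h + 1 = (i:ℝ) := by
      have hn : j + h + 1 = m + i := by omega
      have := congrArg (Nat.cast : ℕ → ℝ) hn
      push_cast at this; linarith
    have hzmem : j ∈ {i | m - h ≤ i ∧ i ≤ m ∧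
        (h : ℝ) * pOrd p Finset.univ i ≤ ((i:ℝ) - m + h + 1) * α} :=
      ⟨hjz, hjm, by rw [hji]; linarith⟩
    have hz_le : zval α p r ≤ j := by
      have hzeq : zval α p r = sInf {i | m - h ≤ i ∧ i ≤ m ∧
          (h : ℝ) * pOrd p Finset.univ i ≤ ((i:ℝ) - m + h + 1) * α} := by
        unfold zval; rw [← hh]; exact if_neg hcase
      rw [hzeq]
      exact Nat.sInf_le hzmem
    obtain ⟨k, hk⟩ : ∃ k : ℕ, m = k + (h+1) := ⟨m - (h+1), by omega⟩
    have hjk : j = k + i := by omega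
    have hmR : (m:ℝ) = (k:ℝ) + h + 1 := by rw [hk]; push_cast; ring
    have hjR : (j:ℝ) = (k:ℝ) + i := by rw [hjk]; push_cast; ring
    have hik : (i:ℝ) ≤ (h:ℝ) + 1 := by exact_mod_cast hi2
    have hk0 : (0:ℝ) ≤ (k:ℝ) := Nat.cast_nonneg k
    have hmulR : (m:ℝ) * i ≤ (j:ℝ) * ((h:ℝ)+1) := by nlinarith [mul_le_mul_of_nonneg_left hik hk0]
    have hbineq : (m:ℝ) * P ≤ (j:ℝ) * α := by
      have t1 : (m:ℝ) * (((h:ℝ)+1) * P) ≤ (m:ℝ) * ((i:ℝ)*α) :=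
        mul_le_mul_of_nonneg_left hkey (by positivity)
      have t2 : ((m:ℝ)*i) * α ≤ ((j:ℝ)*((h:ℝ)+1)) * α :=
        mul_le_mul_of_nonneg_right hmulR hα.1
      have t3 : ((h:ℝ)+1) * ((m:ℝ)*P) ≤ ((h:ℝ)+1) * ((j:ℝ)*α) := by linarith
      exact le_of_mul_le_mul_left t3 (by positivity)
    have hb_ge : j ≤ bval α p :=
      le_csSup ⟨m, fun x hx => hx.2.1⟩ (⟨hj1, hjm, hbineq⟩ :
        j ∈ {i | 1 ≤ i ∧ i ≤ m ∧ (m:ℝ) * pOrd p Finset.univ i ≤ (i:ℝ) * α})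
    have hzb : zval α p r ≤ bval α p := le_trans hz_le hb_ge
    exact ⟨hzb, Lset_mono r hzb⟩
end
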